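/- Let m_0, …, m_{n-1} be natural numbers. For every P ∈ MvPolynomial (Fin n) 𝔽_p with aeval(h) P = ∏_{i=0}^{n-1} d_{n,i}^{m_i} (where aeval(h) substitutes h_1, …, h_n for the n variables), the coefficient in P of the monomial whose exponent vector is (m_0, m_0+m_1, …, m_0+⋯+m_{n-1}) — i.e. whose t-th coordinate equals m_0 + ⋯ + m_{t-1} for 1 ≤ t ≤ n — is equal to 1. -/

import Mathlib

open MvPolynomial

set_option linter.unusedVariables false
set_option linter.unusedSectionVars false

/-- `V p n k` : the set of `𝔽_p`-linear combinations of the first `k` variables. -/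
noncomputable def V (p n k : ℕ) [Fact p.Prime] : Finset (MvPolynomial (Fin n) (ZMod p)) :=
  (Finset.univ : Finset (Fin n → ZMod p)).image
    (fun c => ∑ j ∈ Finset.univ.filter (fun j : Fin n => j.val < k), C (c j) * X j)

section Basics
variable (p n k : ℕ) [Fact p.Prime]

/-- the linear combination -/
noncomputable def L (c : Fin n → ZMod p) : MvPolynomial (Fin n) (ZMod p) :=
  ∑ j ∈ Finset.univ.filter (fun j : Fin n => j.val < k), C (c j) * X j

lemma mem_V {u : MvPolynomial (Fin n) (ZMod p)} :
    u ∈ V p n k ↔ ∃ c : Fin n → ZMod p, L p n k c = u := by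
  simp [V, L, Finset.mem_image]

lemma coeff_L (c : Fin n → ZMod p) (j0 : Fin n) :
    coeff (Finsupp.single j0 1) (L p n k c) = if j0.val < k then c j0 else 0 := by
  rw [L, MvPolynomial.coeff_sum]
  by_cases hlt : j0.val < k
  · rw [if_pos hlt, Finset.sum_eq_single j0]
    · rw [MvPolynomial.coeff_C_mul, MvPolynomial.X, coeff_monomial, if_pos rfl, mul_one]
    · intro b _ hb
      rw [MvPolynomial.coeff_C_mul, MvPolynomial.X, coeff_monomial,
        if_neg (fun he => hb (Finsupp.single_left_injective ((one_ne_zero : (1:ℕ) ≠ 0)) he)),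
        mul_zero]
    · intro h
      exact absurd (Finset.mem_filter.2 ⟨Finset.mem_univ j0, hlt⟩) h
  · rw [if_neg hlt]
    apply Finset.sum_eq_zero
    intro j hj
    rw [Finset.mem_filter] at hj
    have hne : j ≠ j0 := fun he => hlt (he ▸ hj.2)
    rw [MvPolynomial.coeff_C_mul, MvPolynomial.X, coeff_monomial,
      if_neg (fun he => hne (Finsupp.single_left_injective ((one_ne_zero : (1:ℕ) ≠ 0)) he)),
      mul_zero]

lemma L_congr (c c' : Fin n → ZMod p) (h : ∀ j : Fin n, j.val < k → c j = c' j) :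
    L p n k c = L p n k c' := by
  refine Finset.sum_congr rfl fun j hj => ?_
  rw [Finset.mem_filter] at hj
  rw [h j hj.2]

lemma L_add (c c' : Fin n → ZMod p) : L p n k (c + c') = L p n k c + L p n k c' := by
  rw [L, L, L, ← Finset.sum_add_distrib]
  refine Finset.sum_congr rfl fun j _ => ?_
  simp [map_add, add_mul]

lemma L_sub (c c' : Fin n → ZMod p) : L p n k (c - c') = L p n k c - L p n k c' := by
  rw [L, L, L, ← Finset.sum_sub_distrib]
  refine Finset.sum_congr rfl fun j _ => ?_
  simp [map_sub, sub_mul]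

lemma L_smul (lam : ZMod p) (c : Fin n → ZMod p) :
    L p n k (fun j => lam * c j) = C lam * L p n k c := by
  rw [L, L, Finset.mul_sum]
  refine Finset.sum_congr rfl fun j _ => ?_
  rw [map_mul, mul_assoc]

lemma zero_mem_V : (0 : MvPolynomial (Fin n) (ZMod p)) ∈ V p n k := by
  rw [mem_V]
  exact ⟨0, by simp [L]⟩

lemma add_mem_V {u w : MvPolynomial (Fin n) (ZMod p)} (hu : u ∈ V p n k) (hw : w ∈ V p n k) :
    u + w ∈ V p n k := by
  rw [mem_V] at hu hw ⊢
  obtain ⟨c, rfl⟩ := hu; obtain ⟨c', rfl⟩ := hw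
  exact ⟨c + c', L_add p n k c c'⟩

lemma sub_mem_V {u w : MvPolynomial (Fin n) (ZMod p)} (hu : u ∈ V p n k) (hw : w ∈ V p n k) :
    u - w ∈ V p n k := by
  rw [mem_V] at hu hw ⊢
  obtain ⟨c, rfl⟩ := hu; obtain ⟨c', rfl⟩ := hw
  exact ⟨c - c', L_sub p n k c c'⟩

lemma smul_mem_V (lam : ZMod p) {u : MvPolynomial (Fin n) (ZMod p)} (hu : u ∈ V p n k) :
    C lam * u ∈ V p n k := by
  rw [mem_V] at hu ⊢
  obtain ⟨c, rfl⟩ := hu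
  exact ⟨fun j => lam * c j, L_smul p n k lam c⟩

lemma card_V (hkn : k ≤ n) : (V p n k).card = p ^ k := by
  classical
  have hV : V p n k = Finset.image
      (fun b : Fin k → ZMod p => L p n k (fun j : Fin n =>
        if h : j.val < k then b ⟨j.val, h⟩ else 0)) Finset.univ := by
    apply Finset.ext; intro u
    rw [mem_V]
    constructor
    · rintro ⟨c, rfl⟩
      refine Finset.mem_image.2 ⟨fun t => c ⟨t.val, lt_of_lt_of_le t.isLt hkn⟩,
        Finset.mem_univ _, ?_⟩
      apply L_congr
      intro j hj
      simp [hj]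
    · intro hu
      obtain ⟨b, _, rfl⟩ := Finset.mem_image.1 hu
      exact ⟨_, rfl⟩
  rw [hV, Finset.card_image_of_injective _ ?_, Finset.card_univ]
  · simp [ZMod.card]
  · intro b b' he
    funext t
    have h1 := congrArg (coeff (Finsupp.single (⟨t.val, lt_of_lt_of_le t.isLt hkn⟩ : Fin n) 1)) he
    simp only [coeff_L] at h1
    simpa [t.isLt] using h1

end Basics

/-- `f p n k = ∏_{u ∈ V_k} (X - C u)`. -/
noncomputable def f (p n k : ℕ) [Fact p.Prime] :
    Polynomial (MvPolynomial (Fin n) (ZMod p)) :=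
  ∏ u ∈ V p n k, (Polynomial.X - Polynomial.C u)

/-- Dickson invariant `d_{k,i}`. -/
noncomputable def d (p n k i : ℕ) [Fact p.Prime] : MvPolynomial (Fin n) (ZMod p) :=
  (-1) ^ (k - i) * (f p n k).coeff (p ^ i)

/-- Borel generator: `hGen p n j` is `h_{j+1}` of the paper. -/
noncomputable def hGen (p n : ℕ) [Fact p.Prime] (j : Fin n) : MvPolynomial (Fin n) (ZMod p) :=
  (Polynomial.eval (X j) (f p n j.val)) ^ (p - 1)

section FFacts
variable (p n k : ℕ) [Fact p.Prime]

lemma f_monic : (f p n k).Monic :=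
  Polynomial.monic_prod_of_monic _ _ fun u _ => Polynomial.monic_X_sub_C u

lemma f_natDegree (hkn : k ≤ n) : (f p n k).natDegree = p ^ k := by
  rw [f, Polynomial.natDegree_prod _ _ (fun u _ => Polynomial.X_sub_C_ne_zero u)]
  simp [Polynomial.natDegree_X_sub_C, card_V p n k hkn]

lemma eval_f (v : MvPolynomial (Fin n) (ZMod p)) :
    Polynomial.eval v (f p n k) = ∏ u ∈ V p n k, (v - u) := by
  rw [f, Polynomial.eval_prod]
  simp

lemma eval_f_add_mem {w : MvPolynomial (Fin n) (ZMod p)} (hw : w ∈ V p n k)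
    (v : MvPolynomial (Fin n) (ZMod p)) :
    Polynomial.eval (v + w) (f p n k) = Polynomial.eval v (f p n k) := by
  rw [eval_f, eval_f]
  apply Finset.prod_nbij' (fun u => u - w) (fun u => u + w)
  · intro u hu; exact sub_mem_V p n k hu hw
  · intro u hu; exact add_mem_V p n k hu hw
  · intro u _; ring
  · intro u _; ring
  · intro u _; ring

lemma eval_f_smul (hkn : k ≤ n) (lam : ZMod p) (v : MvPolynomial (Fin n) (ZMod p)) :
    Polynomial.eval (C lam * v) (f p n k) = C lam * Polynomial.eval v (f p n k) := by
  rcases eq_or_ne lam 0 with rfl | hlam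
  · rw [eval_f]
    simp only [map_zero, zero_mul]
    rw [Finset.prod_eq_zero (zero_mem_V p n k) (by simp)]
  · rw [eval_f, eval_f]
    have hbij : ∏ u ∈ V p n k, (C lam * v - u) = ∏ u ∈ V p n k, (C lam * v - C lam * u) := by
      apply Finset.prod_nbij' (fun u => C lam⁻¹ * u) (fun u => C lam * u)
      · intro u hu; exact smul_mem_V p n k _ hu
      · intro u hu; exact smul_mem_V p n k _ hu
      · intro u _
        rw [← mul_assoc, ← map_mul, mul_inv_cancel₀ hlam, map_one, one_mul]
      · intro u _
        rw [← mul_assoc, ← map_mul, inv_mul_cancel₀ hlam, map_one, one_mul]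
      · intro u _
        rw [← mul_assoc, ← map_mul, mul_inv_cancel₀ hlam, map_one, one_mul]
    rw [hbij]
    calc ∏ u ∈ V p n k, (C lam * v - C lam * u)
        = ∏ u ∈ V p n k, (C lam * (v - u)) := by
          refine Finset.prod_congr rfl fun u _ => ?_; ring
      _ = (C lam) ^ (V p n k).card * ∏ u ∈ V p n k, (v - u) := by
          rw [Finset.prod_mul_distrib, Finset.prod_const]
      _ = C lam * ∏ u ∈ V p n k, (v - u) := by
          rw [← map_pow, card_V p n k hkn, ZMod.pow_card_pow]

end FFacts

/-- monic polynomial vanishing on a finset of the right cardinality equals the product. -/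
lemma eq_prod_of_roots {R : Type*} [CommRing R] [IsDomain R] :
    ∀ (s : Finset R) (g : Polynomial R), g.Monic → g.natDegree = s.card →
    (∀ a ∈ s, g.eval a = 0) → g = ∏ a ∈ s, (Polynomial.X - Polynomial.C a) := by
  classical
  intro s
  induction s using Finset.induction with
  | empty =>
    intro g hm hd _
    rw [Finset.prod_empty]
    rw [Finset.card_empty] at hd
    exact hm.natDegree_eq_zero.1 hd
  | insert a t ha ih =>
    intro g hm hd hr
    have hroot : Polynomial.IsRoot g a := hr a (Finset.mem_insert_self a t)
    obtain ⟨q, hq⟩ := (Polynomial.dvd_iff_isRoot).2 hroot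
    have hqm : q.Monic := by
      have h1 : (Polynomial.X - Polynomial.C a).Monic := Polynomial.monic_X_sub_C a
      exact h1.of_mul_monic_left (hq ▸ hm)
    have hdq : q.natDegree = t.card := by
      have := hq ▸ hd
      rw [Polynomial.natDegree_mul (Polynomial.X_sub_C_ne_zero a) hqm.ne_zero,
        Polynomial.natDegree_X_sub_C, Finset.card_insert_of_notMem ha] at this
      omega
    have hrq : ∀ b ∈ t, q.eval b = 0 := by
      intro b hb
      have hb' := hr b (Finset.mem_insert_of_mem hb)
      rw [hq, Polynomial.eval_mul, Polynomial.eval_sub, Polynomial.eval_X,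
        Polynomial.eval_C] at hb'
      have hba : b - a ≠ 0 := sub_ne_zero.2 (fun he => ha (he ▸ hb))
      exact (mul_eq_zero.1 hb').resolve_left hba
    rw [Finset.prod_insert ha, hq, ih q hqm hdq hrq]

section Rec
variable (p n : ℕ) [Fact p.Prime]

lemma filter_succ (k : ℕ) (hk : k < n) :
    Finset.univ.filter (fun j : Fin n => j.val < k + 1) =
      insert (⟨k, hk⟩ : Fin n) (Finset.univ.filter (fun j : Fin n => j.val < k)) := by
  apply Finset.ext
  intro j
  simp only [Finset.mem_filter, Finset.mem_insert, Finset.mem_univ, true_and]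
  constructor
  · intro hj
    rcases Nat.lt_succ_iff_lt_or_eq.1 hj with h | h
    · exact Or.inr h
    · exact Or.inl (Fin.ext h)
  · rintro (rfl | h)
    · exact Nat.lt_succ_self k
    · exact Nat.lt_succ_of_lt h

lemma mem_V_succ {k : ℕ} (hk : k < n) {v : MvPolynomial (Fin n) (ZMod p)} (hv : v ∈ V p n (k+1)) :
    ∃ (lam : ZMod p) (w : MvPolynomial (Fin n) (ZMod p)), w ∈ V p n k ∧
      v = C lam * X (⟨k, hk⟩ : Fin n) + w := by
  rw [mem_V] at hv
  obtain ⟨c, rfl⟩ := hv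
  refine ⟨c ⟨k, hk⟩, L p n k c, (mem_V p n k).2 ⟨c, rfl⟩, ?_⟩
  rw [L, L, filter_succ n k hk, Finset.sum_insert (by simp)]

lemma f_rec {k : ℕ} (hk : k < n) :
    f p n (k+1) = (f p n k) ^ p - Polynomial.C (hGen p n ⟨k, hk⟩) * f p n k := by
  have hp2 : 1 < p := (Fact.out : p.Prime).one_lt
  set g : Polynomial (MvPolynomial (Fin n) (ZMod p)) :=
    (f p n k) ^ p - Polynomial.C (hGen p n ⟨k, hk⟩) * f p n k with hg
  have hfm : (f p n k).Monic := f_monic p n k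
  have hfd : (f p n k).natDegree = p ^ k := f_natDegree p n k (le_of_lt hk)
  have hgm : g.Monic := by
    rw [hg, sub_eq_add_neg]
    apply Polynomial.Monic.add_of_left (hfm.pow p)
    rw [Polynomial.degree_neg]
    apply Polynomial.degree_lt_degree
    calc (Polynomial.C (hGen p n ⟨k, hk⟩) * f p n k).natDegree
        ≤ (f p n k).natDegree := Polynomial.natDegree_C_mul_le _ _
      _ < ((f p n k) ^ p).natDegree := by
          rw [Polynomial.natDegree_pow, hfd]
          calc p ^ k < p ^ (k + 1) := Nat.pow_lt_pow_right hp2 (Nat.lt_succ_self k)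
            _ = p * p ^ k := by rw [pow_succ']
  have hgd : g.natDegree = (V p n (k+1)).card := by
    rw [card_V p n (k+1) hk]
    have : g.natDegree = ((f p n k) ^ p).natDegree := by
      rw [hg]
      apply Polynomial.natDegree_sub_eq_left_of_natDegree_lt
      calc (Polynomial.C (hGen p n ⟨k, hk⟩) * f p n k).natDegree
          ≤ (f p n k).natDegree := Polynomial.natDegree_C_mul_le _ _
        _ < ((f p n k) ^ p).natDegree := by
            rw [Polynomial.natDegree_pow, hfd]
            calc p ^ k < p ^ (k + 1) := Nat.pow_lt_pow_right hp2 (Nat.lt_succ_self k)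
              _ = p * p ^ k := by rw [pow_succ']
    rw [this, Polynomial.natDegree_pow, hfd, ← pow_succ']
  have hroots : ∀ v ∈ V p n (k+1), g.eval v = 0 := by
    intro v hv
    obtain ⟨lam, w, hw, rfl⟩ := mem_V_succ p n hk hv
    have heval : Polynomial.eval (C lam * X (⟨k, hk⟩ : Fin n) + w) (f p n k)
        = C lam * Polynomial.eval (X (⟨k, hk⟩ : Fin n)) (f p n k) := by
      rw [eval_f_add_mem p n k hw, eval_f_smul p n k (le_of_lt hk)]
    set h' := Polynomial.eval (X (⟨k, hk⟩ : Fin n)) (f p n k) with hh'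
    rw [hg, Polynomial.eval_sub, Polynomial.eval_mul, Polynomial.eval_pow, Polynomial.eval_C,
      heval, hGen]
    have hsimp : (C lam * h') ^ p = C lam * h' ^ p := by
      rw [mul_pow, ← map_pow, ZMod.pow_card]
    rw [hsimp]
    have : h' ^ (p - 1) * (C lam * h') = C lam * h' ^ p := by
      rw [mul_comm (h' ^ (p-1)), mul_assoc, ← pow_succ', Nat.sub_add_cancel (le_of_lt hp2)]
    rw [this, sub_self]
  have := eq_prod_of_roots (V p n (k+1)) g hgm hgd hroots
  rw [this, f]
end Rec

section DLemmas
variable (p n : ℕ) [Fact p.Prime]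

lemma d_diag {k : ℕ} (hkn : k ≤ n) : d p n k k = 1 := by
  have hfm := f_monic p n k
  have hfd := f_natDegree p n k hkn
  rw [d, Nat.sub_self, pow_zero, one_mul, ← hfd, hfm.coeff_natDegree]

lemma d_zero_of_gt {k i : ℕ} (hkn : k ≤ n) (hki : k < i) : d p n k i = 0 := by
  rw [d, Polynomial.coeff_eq_zero_of_natDegree_lt, mul_zero]
  rw [f_natDegree p n k hkn]
  exact Nat.pow_lt_pow_right (Fact.out : p.Prime).one_lt hki

lemma coeff_pow_p (F : Polynomial (MvPolynomial (Fin n) (ZMod p))) (m : ℕ) :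
    (F ^ p).coeff m = if p ∣ m then (F.coeff (m / p)) ^ p else 0 := by
  have hp : 0 < p := (Fact.out : p.Prime).pos
  rw [← Polynomial.map_frobenius_expand p F, Polynomial.coeff_map, Polynomial.coeff_expand hp]
  split
  · rw [frobenius_def]
  · rw [map_zero]

lemma d_rec_zero {k : ℕ} (hk : k < n) :
    d p n (k+1) 0 = hGen p n ⟨k, hk⟩ * d p n k 0 := by
  rw [d, d, f_rec p n hk, Polynomial.coeff_sub, Polynomial.coeff_C_mul, coeff_pow_p,
    if_neg (by simpa using (Fact.out : p.Prime).one_lt.ne')]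
  rw [Nat.sub_zero, Nat.sub_zero, zero_sub, pow_succ]
  ring

lemma d_rec {k i : ℕ} (hk : k < n) (hik : i < k) :
    d p n (k+1) (i+1) = hGen p n ⟨k, hk⟩ * d p n k (i+1) + (d p n k i) ^ p := by
  have hp : 0 < p := (Fact.out : p.Prime).pos
  rw [d, d, d, f_rec p n hk, Polynomial.coeff_sub, Polynomial.coeff_C_mul, coeff_pow_p,
    if_pos ⟨p ^ i, by rw [pow_succ']⟩]
  have hdiv : p ^ (i+1) / p = p ^ i := by
    rw [pow_succ', Nat.mul_div_cancel_left _ hp]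
  rw [hdiv]
  set c0 := (f p n k).coeff (p ^ i)
  set c1 := (f p n k).coeff (p ^ (i+1))
  set h' := hGen p n ⟨k, hk⟩
  set j := k - (i + 1) with hj
  have e1 : (k+1) - (i+1) = j + 1 := by omega
  have e2 : k - i = j + 1 := by omega
  rw [e1, e2]
  have hsign : ((-1 : MvPolynomial (Fin n) (ZMod p)) ^ (j+1) * c0) ^ p
      = (-1) ^ (j+1) * c0 ^ p := by
    rw [mul_pow, pow_right_comm, neg_one_pow_char]
  rw [hsign]
  ring

end DLemmas
/-- formal Dickson polynomial in the h-variables -/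
noncomputable def D (p n : ℕ) [Fact p.Prime] : ℕ → ℕ → MvPolynomial (Fin n) (ZMod p)
  | 0, 0 => 1
  | 0, _+1 => 0
  | k+1, 0 => (if h : k < n then X (⟨k, h⟩ : Fin n) else 0) * D p n k 0
  | k+1, i+1 =>
      if i + 1 = k + 1 then 1
      else (if h : k < n then X (⟨k, h⟩ : Fin n) else 0) * D p n k (i+1) + (D p n k i) ^ p

section AevalD
variable (p n : ℕ) [Fact p.Prime]

lemma aeval_D : ∀ k, k ≤ n → ∀ i, aeval (hGen p n) (D p n k i) = d p n k i := by
  intro k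
  induction k with
  | zero =>
    intro _ i
    match i with
    | 0 =>
      rw [D, map_one, d_diag p n (Nat.zero_le n)]
    | i+1 =>
      rw [D, map_zero, d_zero_of_gt p n (Nat.zero_le n) (Nat.succ_pos i)]
  | succ k ih =>
    intro hk1 i
    have hk : k < n := hk1
    have hkn : k ≤ n := le_of_lt hk
    match i with
    | 0 =>
      rw [D, dif_pos hk, map_mul, aeval_X, ih hkn 0, d_rec_zero p n hk]
    | i+1 =>
      by_cases he : i + 1 = k + 1
      · rw [D, if_pos he, map_one, he, d_diag p n hk1]
      · rw [D, if_neg he, map_add, map_mul, map_pow, dif_pos hk, aeval_X, ih hkn (i+1), ih hkn i]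
        rcases lt_or_ge i k with hik | hik
        · rw [d_rec p n hk hik]
        · have hik' : k < i := by omega
          rw [d_zero_of_gt p n hkn hik', d_zero_of_gt p n hkn (by omega : k < i + 1),
            d_zero_of_gt p n hk1 (by omega : k + 1 < i + 1)]
          simp [(Fact.out : p.Prime).ne_zero]

end AevalD
section Weights

/-- weight of an exponent vector -/
def ω (p n : ℕ) (a : Fin n →₀ ℕ) : ℕ := ∑ j : Fin n, a j * (2*p)^(j.val+1)

variable (p n : ℕ)

lemma omega_add (a b : Fin n →₀ ℕ) : ω p n (a + b) = ω p n a + ω p n b := by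
  rw [ω, ω, ω, ← Finset.sum_add_distrib]
  refine Finset.sum_congr rfl fun j _ => ?_
  rw [Finsupp.add_apply, add_mul]

lemma omega_zero : ω p n 0 = 0 := by simp [ω]

lemma omega_single (j : Fin n) : ω p n (Finsupp.single j 1) = (2*p)^(j.val+1) := by
  rw [ω, Finset.sum_eq_single j]
  · rw [Finsupp.single_apply, if_pos rfl, one_mul]
  · intro b _ hb
    rw [Finsupp.single_apply, if_neg (fun h => hb h.symm), zero_mul]
  · intro h; exact absurd (Finset.mem_univ j) h

/-- expected leading exponent of `D k i` -/
noncomputable def EE (p n k i : ℕ) : Fin n →₀ ℕ :=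
  Finsupp.equivFunOnFinite.symm (fun j : Fin n => if i ≤ j.val ∧ j.val < k then 1 else 0)

lemma EE_apply (k i : ℕ) (j : Fin n) :
    EE p n k i j = if i ≤ j.val ∧ j.val < k then 1 else 0 := rfl

lemma EE_diag (k : ℕ) : EE p n k k = 0 := by
  ext j
  rw [EE_apply, if_neg (by omega), Finsupp.coe_zero, Pi.zero_apply]

lemma EE_succ (k i : ℕ) (hk : k < n) (hik : i ≤ k) :
    Finsupp.single (⟨k, hk⟩ : Fin n) 1 + EE p n k i = EE p n (k+1) i := by
  ext j
  rw [Finsupp.add_apply, EE_apply, EE_apply, Finsupp.single_apply]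
  by_cases hj : (⟨k, hk⟩ : Fin n) = j
  · rw [if_pos hj]
    have : j.val = k := by rw [← hj]
    rw [if_neg (by omega), if_pos (by omega)]
  · rw [if_neg hj]
    have : j.val ≠ k := fun h => hj (Fin.ext h.symm)
    by_cases hc : i ≤ j.val ∧ j.val < k
    · rw [if_pos hc, if_pos (by omega)]
    · rw [if_neg hc, if_neg (by omega)]

/-- `Good e P` : `e` is the strictly-maximal-weight exponent of `P` and has coefficient 1. -/
def Good (p n : ℕ) [Fact p.Prime] (e : Fin n →₀ ℕ) (P : MvPolynomial (Fin n) (ZMod p)) : Prop :=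
  coeff e P = 1 ∧ ∀ a ∈ P.support, ω p n a ≤ ω p n e ∧ (ω p n a = ω p n e → a = e)

variable [Fact p.Prime]

lemma mem_support_one {a : Fin n →₀ ℕ} (ha : a ∈ (1 : MvPolynomial (Fin n) (ZMod p)).support) :
    a = 0 := by
  rw [MvPolynomial.mem_support_iff] at ha
  by_contra h0
  have h1 : (1 : MvPolynomial (Fin n) (ZMod p)) = C 1 := by rw [map_one]
  rw [h1, MvPolynomial.coeff_C, if_neg (fun h => h0 h.symm)] at ha
  exact ha rfl

lemma Good.one : Good p n 0 1 := by
  constructor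
  · simp
  · intro a ha
    have := mem_support_one p n ha
    subst this
    exact ⟨le_refl _, fun _ => rfl⟩

lemma Good.X (j : Fin n) : Good p n (Finsupp.single j 1) (X j) := by
  constructor
  · exact MvPolynomial.coeff_X_same (R := ZMod p) j
  · intro a ha
    rw [MvPolynomial.support_X] at ha
    simp only [Finset.mem_singleton] at ha
    subst ha
    exact ⟨le_refl _, fun _ => rfl⟩

lemma Good.mul {e1 e2 : Fin n →₀ ℕ} {P1 P2 : MvPolynomial (Fin n) (ZMod p)}
    (h1 : Good p n e1 P1) (h2 : Good p n e2 P2) : Good p n (e1 + e2) (P1 * P2) := by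
  classical
  obtain ⟨hc1, hs1⟩ := h1
  obtain ⟨hc2, hs2⟩ := h2
  constructor
  · rw [MvPolynomial.coeff_mul]
    have hmain : ∀ x ∈ Finset.HasAntidiagonal.antidiagonal (e1 + e2),
        x ≠ (e1, e2) → coeff x.1 P1 * coeff x.2 P2 = 0 := by
      rintro ⟨a, b⟩ hab hne
      simp only
      rw [Finset.HasAntidiagonal.mem_antidiagonal] at hab
      by_contra hcon
      have ha : a ∈ P1.support := by
        rw [MvPolynomial.mem_support_iff]; intro h0; rw [h0, zero_mul] at hcon; exact hcon rfl
      have hb : b ∈ P2.support := by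
        rw [MvPolynomial.mem_support_iff]; intro h0; rw [h0, mul_zero] at hcon; exact hcon rfl
      have hwa := hs1 a ha
      have hwb := hs2 b hb
      have hsum : ω p n a + ω p n b = ω p n e1 + ω p n e2 := by
        rw [← omega_add, ← omega_add, hab]
      have hea : ω p n a = ω p n e1 := by omega
      have heb : ω p n b = ω p n e2 := by omega
      exact hne (Prod.ext (hwa.2 hea) (hwb.2 heb))
    rw [Finset.sum_eq_single_of_mem (e1, e2) (Finset.HasAntidiagonal.mem_antidiagonal.2 rfl) hmain,
      hc1, hc2, one_mul]
  · intro a ha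
    have := MvPolynomial.support_mul P1 P2 ha
    rw [Finset.mem_add] at this
    obtain ⟨u, hu, v, hv, rfl⟩ := this
    have hwu := hs1 u hu
    have hwv := hs2 v hv
    rw [omega_add, omega_add]
    constructor
    · exact Nat.add_le_add hwu.1 hwv.1
    · intro he
      have heu : ω p n u = ω p n e1 := by omega
      have hev : ω p n v = ω p n e2 := by omega
      rw [hwu.2 heu, hwv.2 hev]

lemma Good.pow {e : Fin n →₀ ℕ} {P : MvPolynomial (Fin n) (ZMod p)}
    (h : Good p n e P) (m : ℕ) : Good p n (m • e) (P ^ m) := by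
  induction m with
  | zero => simpa using Good.one p n
  | succ m ih =>
    rw [pow_succ, succ_nsmul]
    exact Good.mul p n ih h

lemma Good.prod {ι : Type*} (s : Finset ι) (e : ι → (Fin n →₀ ℕ))
    (P : ι → MvPolynomial (Fin n) (ZMod p)) (h : ∀ i ∈ s, Good p n (e i) (P i)) :
    Good p n (∑ i ∈ s, e i) (∏ i ∈ s, P i) := by
  classical
  induction s using Finset.induction with
  | empty => simpa using Good.one p n
  | insert a t hmem ih =>
    rw [Finset.sum_insert hmem, Finset.prod_insert hmem]
    exact Good.mul p n (h a (Finset.mem_insert_self a t))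
      (ih fun i hi => h i (Finset.mem_insert_of_mem hi))

lemma Good.add_small {e : Fin n →₀ ℕ} {A B : MvPolynomial (Fin n) (ZMod p)}
    (hA : Good p n e A) (hB : ∀ a ∈ B.support, ω p n a < ω p n e) :
    Good p n e (A + B) := by
  obtain ⟨hc, hs⟩ := hA
  have hceB : coeff e B = 0 := by
    by_contra h0
    exact absurd (hB e (MvPolynomial.mem_support_iff.2 h0)) (lt_irrefl _)
  constructor
  · rw [MvPolynomial.coeff_add, hc, hceB, add_zero]
  · intro a ha
    have := MvPolynomial.support_add (p := A) (q := B) ha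
    rw [Finset.mem_union] at this
    rcases this with h | h
    · exact hs a h
    · exact ⟨le_of_lt (hB a h), fun he => absurd (he ▸ hB a h) (lt_irrefl _)⟩

lemma supp_pow_bound {P : MvPolynomial (Fin n) (ZMod p)} {B : ℕ}
    (h : ∀ a ∈ P.support, ω p n a ≤ B) (m : ℕ) :
    ∀ a ∈ (P ^ m).support, ω p n a ≤ m * B := by
  classical
  induction m with
  | zero =>
    intro a ha
    rw [pow_zero] at ha
    have := mem_support_one p n ha
    subst this
    simp [omega_zero]
  | succ m ih =>
    intro a ha
    rw [pow_succ] at ha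
    have := MvPolynomial.support_mul _ _ ha
    rw [Finset.mem_add] at this
    obtain ⟨u, hu, v, hv, rfl⟩ := this
    rw [omega_add, Nat.succ_mul]
    exact Nat.add_le_add (ih u hu) (h v hv)

end Weights
section GoodD
variable (p n : ℕ) [Fact p.Prime]

lemma omega_EE_le (k i : ℕ) :
    ω p n (EE p n k i) ≤ ∑ t ∈ Finset.range k, (2*p)^(t+1) := by
  have h1 : ω p n (EE p n k i) =
      ∑ j ∈ Finset.univ.filter (fun j : Fin n => i ≤ j.val ∧ j.val < k), (2*p)^(j.val+1) := by
    rw [ω, Finset.sum_filter]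
    refine Finset.sum_congr rfl fun j _ => ?_
    rw [EE_apply]
    split <;> simp
  have h2 : ∑ t ∈ (Finset.univ.filter (fun j : Fin n => i ≤ j.val ∧ j.val < k)).image Fin.val,
        (2*p)^(t+1)
      = ∑ j ∈ Finset.univ.filter (fun j : Fin n => i ≤ j.val ∧ j.val < k), (2*p)^(j.val+1) :=
    Finset.sum_image (fun x _ y _ h => Fin.ext h)
  rw [h1, ← h2]
  apply Finset.sum_le_sum_of_subset
  intro t ht
  rw [Finset.mem_image] at ht
  obtain ⟨j, hj, rfl⟩ := ht
  rw [Finset.mem_filter] at hj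
  exact Finset.mem_range.2 hj.2.2

lemma mygeom_lt (k : ℕ) : p * ∑ t ∈ Finset.range k, (2*p)^(t+1) < (2*p)^(k+1) := by
  have hp : 0 < p := (Fact.out : p.Prime).pos
  induction k with
  | zero => simpa using by positivity
  | succ k ih =>
    rw [Finset.sum_range_succ, Nat.mul_add]
    calc p * ∑ t ∈ Finset.range k, (2*p)^(t+1) + p * (2*p)^(k+1)
        < (2*p)^(k+1) + p * (2*p)^(k+1) := by omega
      _ = (p+1) * (2*p)^(k+1) := by ring
      _ ≤ (2*p) * (2*p)^(k+1) := Nat.mul_le_mul_right _ (by omega)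
      _ = (2*p)^(k+1+1) := by ring

lemma omega_EE_succ_ge {k i : ℕ} (hk : k < n) (hik : i ≤ k) :
    (2*p)^(k+1) ≤ ω p n (EE p n (k+1) i) := by
  have hterm : EE p n (k+1) i ⟨k, hk⟩ * (2*p)^(k+1) = (2*p)^(k+1) := by
    rw [EE_apply, if_pos (by simp only [Fin.val_mk]; omega), one_mul]
  rw [ω, ← hterm]
  exact Finset.single_le_sum (f := fun j : Fin n => EE p n (k+1) i j * (2*p)^(j.val+1))
    (fun _ _ => Nat.zero_le _) (Finset.mem_univ (⟨k, hk⟩ : Fin n))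

lemma good_D : ∀ k, k ≤ n → ∀ i, i ≤ k → Good p n (EE p n k i) (D p n k i) := by
  intro k
  induction k with
  | zero =>
    intro _ i hi
    interval_cases i
    rw [D, EE_diag]
    exact Good.one p n
  | succ k ih =>
    intro hk1 i hi
    have hk : k < n := hk1
    rcases Nat.lt_succ_iff_lt_or_eq.1 (Nat.lt_succ_of_le hi) with hik | rfl
    · -- i ≤ k
      have hik' : i ≤ k := by omega
      have hXD : Good p n (EE p n (k+1) i)
          ((X (⟨k, hk⟩ : Fin n)) * D p n k i) := by
        rw [← EE_succ p n k i hk hik']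
        exact Good.mul p n (Good.X p n ⟨k, hk⟩) (ih (le_of_lt hk) i hik')
      match i, hik' with
      | 0, _ =>
        rw [D, dif_pos hk]
        exact hXD
      | i'+1, hik' =>
        rw [D, if_neg (by omega), dif_pos hk]
        apply Good.add_small p n hXD
        intro a ha
        have hb := supp_pow_bound p n (fun a ha => (((ih (le_of_lt hk) i' (by omega)).2) a ha).1) p a ha
        calc ω p n a ≤ p * ω p n (EE p n k i') := hb
          _ ≤ p * ∑ t ∈ Finset.range k, (2*p)^(t+1) :=
              Nat.mul_le_mul_left _ (omega_EE_le p n k i')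
          _ < (2*p)^(k+1) := mygeom_lt p k
          _ ≤ ω p n (EE p n (k+1) (i'+1)) := omega_EE_succ_ge p n hk (by omega)
    · -- i = k+1
      rw [EE_diag]
      show Good p n 0 (D p n (k+1) (k+1))
      rw [D, if_pos rfl]
      exact Good.one p n

end GoodD
section Inj

lemma digits_inj : ∀ (N : ℕ) (K : ℕ), 0 < K → ∀ (a b : Fin N → ℕ), (∀ j, a j < K) →
    (∀ j, b j < K) → (∑ j : Fin N, a j * K ^ j.val) = (∑ j : Fin N, b j * K ^ j.val) → a = b := by
  intro N
  induction N with
  | zero =>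
    intro K _ a b _ _ _
    funext j
    exact absurd j.isLt (Nat.not_lt_zero _)
  | succ N ih =>
    intro K hK a b ha hb heq
    have hsum : ∀ c : Fin (N+1) → ℕ, ∑ j : Fin (N+1), c j * K ^ j.val
        = c 0 + K * ∑ j : Fin N, c j.succ * K ^ j.val := by
      intro c
      rw [Fin.sum_univ_succ, Finset.mul_sum]
      simp only [Fin.val_zero, pow_zero, mul_one, Fin.val_succ]
      congr 1
      refine Finset.sum_congr rfl fun j _ => ?_
      rw [pow_succ']
      ring
    rw [hsum a, hsum b] at heq
    have h0 : a 0 = b 0 := by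
      have h1 : a 0 % K = b 0 % K := by
        have := congrArg (· % K) heq
        simpa [Nat.add_mul_mod_self_left] using this
      rwa [Nat.mod_eq_of_lt (ha 0), Nat.mod_eq_of_lt (hb 0)] at h1
    have htail : (fun j : Fin N => a j.succ) = (fun j : Fin N => b j.succ) := by
      apply ih K hK _ _ (fun j => ha j.succ) (fun j => hb j.succ)
      rw [h0] at heq
      have h2 : K * ∑ j : Fin N, a j.succ * K ^ j.val
          = K * ∑ j : Fin N, b j.succ * K ^ j.val := by omega
      exact Nat.eq_of_mul_eq_mul_left hK h2
    funext j
    rcases Fin.eq_zero_or_eq_succ j with rfl | ⟨j', rfl⟩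
    · exact h0
    · exact congrFun htail j'

variable (p n : ℕ) [Fact p.Prime]

lemma exp_le_totalDegree {R : MvPolynomial (Fin n) (ZMod p)} {a : Fin n →₀ ℕ}
    (ha : a ∈ R.support) (j : Fin n) : a j ≤ R.totalDegree := by
  refine le_trans ?_ (MvPolynomial.le_totalDegree ha)
  by_cases h : a j = 0
  · omega
  · have hj : j ∈ a.support := Finsupp.mem_support_iff.2 h
    exact Finset.single_le_sum (f := fun j' => a j') (fun _ _ => Nat.zero_le _) hj

/-- the test substitution -/
noncomputable def ψ (N : ℕ) : MvPolynomial (Fin n) (ZMod p) →ₐ[ZMod p] Polynomial (ZMod p) :=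
  aeval (fun j : Fin n => (Polynomial.X : Polynomial (ZMod p)) ^ (N+2)^j.val)

lemma psi_V_deg (N k : ℕ) {u : MvPolynomial (Fin n) (ZMod p)} (hu : u ∈ V p n k) :
    (ψ p n N u).degree < ((N+2)^k : ℕ) := by
  rw [mem_V] at hu
  obtain ⟨c, rfl⟩ := hu
  rw [L, map_sum]
  apply lt_of_le_of_lt (Polynomial.degree_sum_le _ _)
  rw [Finset.sup_lt_iff (by exact_mod_cast WithBot.bot_lt_coe _)]
  intro j hj
  rw [Finset.mem_filter] at hj
  rw [map_mul]
  simp only [ψ, aeval_C, aeval_X]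
  have h1 : Polynomial.degree ((algebraMap (ZMod p) (Polynomial (ZMod p))) (c j) *
      Polynomial.X ^ (N+2)^j.val) ≤ ((N+2)^j.val : ℕ) := by
    rw [Polynomial.algebraMap_eq]
    exact Polynomial.degree_C_mul_X_pow_le _ _
  apply lt_of_le_of_lt h1
  exact_mod_cast Nat.pow_lt_pow_right (by omega) hj.2

lemma psi_hGen_monic (N : ℕ) (j : Fin n) :
    (ψ p n N (hGen p n j)).Monic ∧
      (ψ p n N (hGen p n j)).natDegree = (p-1) * (p*(N+2))^j.val := by
  have hp2 : 1 < p := (Fact.out : p.Prime).one_lt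
  have hG : hGen p n j = (∏ u ∈ V p n j.val, (X j - u)) ^ (p-1) := by
    rw [hGen, eval_f]
  have hpsi : ψ p n N (hGen p n j)
      = (∏ u ∈ V p n j.val, (Polynomial.X ^ (N+2)^j.val - ψ p n N u)) ^ (p-1) := by
    rw [hG, map_pow, map_prod]
    congr 1
    refine Finset.prod_congr rfl fun u _ => ?_
    rw [map_sub]
    congr 1
    simp only [ψ, aeval_X]
  have hfac : ∀ u ∈ V p n j.val, (Polynomial.X ^ (N+2)^j.val - ψ p n N u).Monic :=
    fun u hu => Polynomial.monic_X_pow_sub (psi_V_deg p n N j.val hu)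
  have hfacd : ∀ u ∈ V p n j.val,
      (Polynomial.X ^ (N+2)^j.val - ψ p n N u).natDegree = (N+2)^j.val := by
    intro u hu
    have hnd : (ψ p n N u).natDegree < (N+2)^j.val := by
      by_cases h0 : ψ p n N u = 0
      · rw [h0, Polynomial.natDegree_zero]
        positivity
      · exact (Polynomial.natDegree_lt_iff_degree_lt h0).2 (psi_V_deg p n N j.val hu)
    rw [Polynomial.natDegree_sub_eq_left_of_natDegree_lt
      (by rwa [Polynomial.natDegree_X_pow]), Polynomial.natDegree_X_pow]
  have hprod : (∏ u ∈ V p n j.val, (Polynomial.X ^ (N+2)^j.val - ψ p n N u)).Monic :=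
    Polynomial.monic_prod_of_monic _ _ hfac
  constructor
  · rw [hpsi]; exact hprod.pow _
  · rw [hpsi, Polynomial.natDegree_pow, Polynomial.natDegree_prod_of_monic _ _ hfac,
      Finset.sum_congr rfl hfacd, Finset.sum_const, card_V p n j.val (le_of_lt j.isLt),
      smul_eq_mul, mul_pow]

/-- degree of the image of a monomial in the h's -/
def dg (N : ℕ) (a : Fin n →₀ ℕ) : ℕ := ∑ j : Fin n, a j * ((p-1) * (p*(N+2))^j.val)

lemma psi_mono_monic (N : ℕ) (a : Fin n →₀ ℕ) :
    (a.prod fun j e => (ψ p n N (hGen p n j)) ^ e).Monic ∧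
      (a.prod fun j e => (ψ p n N (hGen p n j)) ^ e).natDegree = dg p n N a := by
  have hm : ∀ j ∈ a.support, ((ψ p n N (hGen p n j)) ^ (a j)).Monic :=
    fun j _ => ((psi_hGen_monic p n N j).1).pow _
  constructor
  · exact Polynomial.monic_prod_of_monic _ _ hm
  · rw [Finsupp.prod, Polynomial.natDegree_prod_of_monic _ _ hm, dg]
    rw [← Finset.sum_subset (Finset.subset_univ a.support)]
    · refine Finset.sum_congr rfl fun j _ => ?_
      rw [Polynomial.natDegree_pow, (psi_hGen_monic p n N j).2]
    · intro j _ hj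
      rw [Finsupp.notMem_support_iff.1 hj, zero_mul]

lemma aeval_hGen_eq_zero {R : MvPolynomial (Fin n) (ZMod p)}
    (h : aeval (hGen p n) R = 0) : R = 0 := by
  by_contra hR
  have hp2 : 1 < p := (Fact.out : p.Prime).one_lt
  set N := R.totalDegree with hN
  -- image of the equation under ψ
  have hsum : ∑ a ∈ R.support, Polynomial.C (coeff a R) *
      (a.prod fun j e => (ψ p n N (hGen p n j)) ^ e) = 0 := by
    have h1 : aeval (hGen p n) R = ∑ a ∈ R.support,
        C (coeff a R) * (a.prod fun j e => (hGen p n j) ^ e) := by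
      conv_lhs => rw [as_sum R]
      rw [map_sum]
      exact Finset.sum_congr rfl fun a _ => by rw [aeval_monomial, algebraMap_eq]
    have h2 := congrArg (ψ p n N) h1
    rw [h, map_zero, map_sum] at h2
    refine Eq.trans (Finset.sum_congr rfl fun a _ => ?_) h2.symm
    rw [map_mul]
    congr 1
    · have hC : (C (coeff a R) : MvPolynomial (Fin n) (ZMod p))
          = algebraMap (ZMod p) (MvPolynomial (Fin n) (ZMod p)) (coeff a R) := rfl
      rw [hC, AlgHom.commutes, Polynomial.algebraMap_eq]
    · rw [Finsupp.prod, Finsupp.prod, map_prod]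
      exact (Finset.prod_congr rfl fun j _ => by rw [map_pow]).symm
  -- pick the maximal degree monomial
  obtain ⟨a0, ha0, hmax⟩ := Finset.exists_max_image R.support (dg p n N)
    (MvPolynomial.support_nonempty.2 hR)
  -- dg is injective on the support
  have hdg_inj : ∀ a ∈ R.support, dg p n N a = dg p n N a0 → a = a0 := by
    intro a ha heq
    have hrw : ∀ b : Fin n →₀ ℕ, dg p n N b = (p-1) * ∑ j : Fin n, b j * (p*(N+2)) ^ j.val := by
      intro b
      rw [dg, Finset.mul_sum]
      exact Finset.sum_congr rfl fun j _ => by ring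
    rw [hrw a, hrw a0] at heq
    have heq2 := Nat.eq_of_mul_eq_mul_left (by omega : 0 < p - 1) heq
    have hbnd : ∀ (b : Fin n →₀ ℕ), b ∈ R.support → ∀ j, b j < p * (N+2) := by
      intro b hb j
      have := exp_le_totalDegree p n hb j
      have hKbig : N < p * (N+2) := by nlinarith
      omega
    have := digits_inj n (p*(N+2)) (by positivity) (fun j => a j) (fun j => a0 j)
      (hbnd a ha) (hbnd a0 ha0) heq2
    exact Finsupp.ext fun j => congrFun this j
  -- evaluate the coefficient at degree dg a0
  have hcoeff : ∑ a ∈ R.support, (Polynomial.C (coeff a R) *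
      (a.prod fun j e => (ψ p n N (hGen p n j)) ^ e)).coeff (dg p n N a0) = 0 := by
    rw [← Polynomial.finset_sum_coeff, hsum, Polynomial.coeff_zero]
  have hside : ∀ a ∈ R.support, a ≠ a0 → (Polynomial.C (coeff a R) *
      (a.prod fun j e => (ψ p n N (hGen p n j)) ^ e)).coeff (dg p n N a0) = 0 := by
    intro a ha hne
    have hlt : dg p n N a < dg p n N a0 := by
      rcases lt_or_eq_of_le (hmax a ha) with hc | hc
      · exact hc
      · exact absurd (hdg_inj a ha hc) hne
    rw [Polynomial.coeff_C_mul, Polynomial.coeff_eq_zero_of_natDegree_lt, mul_zero]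
    rw [(psi_mono_monic p n N a).2]
    exact hlt
  rw [Finset.sum_eq_single_of_mem a0 ha0 hside] at hcoeff
  rw [Polynomial.coeff_C_mul, ← (psi_mono_monic p n N a0).2,
    ((psi_mono_monic p n N a0).1).coeff_natDegree, mul_one] at hcoeff
  exact (MvPolynomial.mem_support_iff.1 ha0) hcoeff

lemma aeval_hGen_injective : Function.Injective (aeval (hGen p n) :
    MvPolynomial (Fin n) (ZMod p) →ₐ[ZMod p] MvPolynomial (Fin n) (ZMod p)) := by
  intro A B hAB
  have : aeval (hGen p n) (A - B) = 0 := by rw [map_sub, hAB, sub_self]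
  have := aeval_hGen_eq_zero p n this
  linear_combination (norm := abel) this

end Inj

/-- Action of `GL_n(𝔽_p)` on `S` by linear substitution `g · y_j = ∑_i g_{ij} y_i`. -/
noncomputable def gact (p n : ℕ) [Fact p.Prime] (g : GL (Fin n) (ZMod p)) :
    MvPolynomial (Fin n) (ZMod p) →ₐ[ZMod p] MvPolynomial (Fin n) (ZMod p) :=
  aeval (fun j : Fin n => ∑ i : Fin n, C ((g : Matrix (Fin n) (Fin n) (ZMod p)) i j) * X i)

/-- writing `∏ d_{n,i}^{m_i}` in the `h`'s, the monomial with exponent vector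
`(m_0, m_0+m_1, …, m_0+⋯+m_{n-1})` occurs with coefficient `1`. -/
theorem stmt13 (p n : ℕ) [Fact p.Prime] (m : Fin n → ℕ)
    (P : MvPolynomial (Fin n) (ZMod p))
    (hP : aeval (hGen p n) P = ∏ i : Fin n, (d p n n i.val) ^ (m i)) :
    MvPolynomial.coeff
      (Finsupp.equivFunOnFinite.symm (fun j : Fin n => ∑ i ∈ Finset.Iic j, m i)) P = 1 := by
  classical
  set Q : MvPolynomial (Fin n) (ZMod p) := ∏ i : Fin n, (D p n n i.val) ^ (m i) with hQ
  have haQ : aeval (hGen p n) Q = ∏ i : Fin n, (d p n n i.val) ^ (m i) := by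
    rw [hQ, map_prod]
    exact Finset.prod_congr rfl fun i _ => by
      rw [map_pow, aeval_D p n n le_rfl i.val]
  have hPQ : P = Q := aeval_hGen_injective p n (by rw [hP, haQ])
  have hgood : Good p n (∑ i : Fin n, m i • EE p n n i.val) Q :=
    Good.prod p n Finset.univ _ _ (fun i _ =>
      Good.pow p n (good_D p n n le_rfl i.val (le_of_lt i.isLt)) (m i))
  have hE : (∑ i : Fin n, m i • EE p n n i.val)
      = Finsupp.equivFunOnFinite.symm (fun j : Fin n => ∑ i ∈ Finset.Iic j, m i) := by
    ext j
    rw [Finsupp.finset_sum_apply]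
    have hrhs : (Finsupp.equivFunOnFinite.symm
        (fun j : Fin n => ∑ i ∈ Finset.Iic j, m i)) j = ∑ i ∈ Finset.Iic j, m i := rfl
    rw [hrhs]
    have hterm : ∀ i : Fin n, (m i • EE p n n i.val) j = if i ≤ j then m i else 0 := by
      intro i
      rw [Finsupp.smul_apply, EE_apply, smul_eq_mul]
      by_cases hij : i ≤ j
      · rw [if_pos ⟨Fin.le_def.1 hij, j.isLt⟩, if_pos hij, mul_one]
      · rw [if_neg (fun hc => hij (Fin.le_def.2 hc.1)), if_neg hij, mul_zero]
    rw [Finset.sum_congr rfl fun i _ => hterm i, ← Finset.sum_filter]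
    refine Finset.sum_congr ?_ fun _ _ => rfl
    apply Finset.ext
    intro i
    simp [Finset.mem_Iic, Finset.mem_filter]
  rw [hPQ, ← hE]
  exact hgood.1
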